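/- Let m : ℝ → ℝ be smooth with m(0) = 0, let γ ∈ ℝ with γ ≠ 0, ε ∈ {1, −1}, and define b(y) = ε·(γ + m′(y)/γ) and c(y) = −γ + m′(y)/γ, so that B(y) = ε·(γ·y + m(y)/γ). Then for every smooth function q : ℝ → ℝ and every smooth function u : ℝ² → ℝ (not necessarily a solution), the identity exp(γx)·q(x − εt)·F[u] = ∂ₜ[ exp(γx)·( q(x − εt)·(∂ₜu + B(u)) + ε·q′(x − εt)·u ) ] + ∂ₓ[ exp(γx)·( (q′(x − εt) − γ·q(x − εt))·u − q(x − εt)·(∂ₓu − ε·B(u)) ) ] holds on ℝ². In particular, exp(γx)·q(x − εt) is a conservation law multiplier, and on every solution of F[u] = 0 the displayed current is divergence-free. -/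

import Mathlib

noncomputable section

open Real

/-- Partial derivative in the first (time) variable. -/
def Dt (u : ℝ → ℝ → ℝ) : ℝ → ℝ → ℝ := fun t x => deriv (fun s => u s x) t

/-- Partial derivative in the second (space) variable. -/
def Dx (u : ℝ → ℝ → ℝ) : ℝ → ℝ → ℝ := fun t x => deriv (fun s => u t s) x

/-- Smoothness (C^∞) of a function of two real variables. -/
def Smooth2 (u : ℝ → ℝ → ℝ) : Prop := ContDiff ℝ (⊤ : ℕ∞) (fun p : ℝ × ℝ => u p.1 p.2)
/-- The semilinear wave operator F[u] = ∂ₜ²u − ∂ₓ²u + b(u)∂ₜu + c(u)∂ₓu + m(u). -/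
def Fop (b c m : ℝ → ℝ) (u : ℝ → ℝ → ℝ) : ℝ → ℝ → ℝ := fun t x =>
  Dt (Dt u) t x - Dx (Dx u) t x + b (u t x) * Dt u t x + c (u t x) * Dx u t x + m (u t x)

/-- The adjoint linearized operator along u:
L*[u]q = ∂ₜ²q − ∂ₓ²q − b(u)∂ₜq − c(u)∂ₓq + m′(u)q. -/
def Lstar (b c m : ℝ → ℝ) (u q : ℝ → ℝ → ℝ) : ℝ → ℝ → ℝ := fun t x =>
  Dt (Dt q) t x - Dx (Dx q) t x - b (u t x) * Dt q t x - c (u t x) * Dx q t x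
    + deriv m (u t x) * q t x

/-- exp(γx)·q(x − εt) is a conservation law multiplier of the semilinear wave
equation with b = ε(γ + m′/γ), c = −γ + m′/γ. -/
lemma hdat (u : ℝ → ℝ → ℝ) (hu : Smooth2 u) (t x : ℝ) :
    HasDerivAt (fun s => u s x) (fderiv ℝ (fun p : ℝ × ℝ => u p.1 p.2) (t, x) (1, 0)) t := by
  have h := (hu.differentiable (by simp) (t, x)).hasFDerivAt
  have hl : HasDerivAt (fun s : ℝ => ((s, x) : ℝ × ℝ)) ((1 : ℝ), (0 : ℝ)) t :=
    (hasDerivAt_id t).prodMk (hasDerivAt_const t x)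
  exact h.comp_hasDerivAt t hl

lemma hdax (u : ℝ → ℝ → ℝ) (hu : Smooth2 u) (t x : ℝ) :
    HasDerivAt (fun s => u t s) (fderiv ℝ (fun p : ℝ × ℝ => u p.1 p.2) (t, x) (0, 1)) x := by
  have h := (hu.differentiable (by simp) (t, x)).hasFDerivAt
  have hl : HasDerivAt (fun s : ℝ => ((t, s) : ℝ × ℝ)) ((0 : ℝ), (1 : ℝ)) x :=
    (hasDerivAt_const x t).prodMk (hasDerivAt_id x)
  exact h.comp_hasDerivAt x hl

lemma smooth_Dt (u : ℝ → ℝ → ℝ) (hu : Smooth2 u) : Smooth2 (Dt u) := by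
  have he : (fun p : ℝ × ℝ => Dt u p.1 p.2)
      = fun p : ℝ × ℝ => fderiv ℝ (fun p : ℝ × ℝ => u p.1 p.2) p (1, 0) := by
    funext p; exact (hdat u hu p.1 p.2).deriv
  rw [Smooth2, he]
  exact (hu.fderiv_right (by exact_mod_cast le_top)).clm_apply contDiff_const

lemma smooth_Dx (u : ℝ → ℝ → ℝ) (hu : Smooth2 u) : Smooth2 (Dx u) := by
  have he : (fun p : ℝ × ℝ => Dx u p.1 p.2)
      = fun p : ℝ × ℝ => fderiv ℝ (fun p : ℝ × ℝ => u p.1 p.2) p (0, 1) := by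
    funext p; exact (hdax u hu p.1 p.2).deriv
  rw [Smooth2, he]
  exact (hu.fderiv_right (by exact_mod_cast le_top)).clm_apply contDiff_const

lemma hDt (u : ℝ → ℝ → ℝ) (hu : Smooth2 u) (t x : ℝ) :
    HasDerivAt (fun s => u s x) (Dt u t x) t := by
  have h := hdat u hu t x
  rwa [show Dt u t x = _ from h.deriv]

lemma hDx (u : ℝ → ℝ → ℝ) (hu : Smooth2 u) (t x : ℝ) :
    HasDerivAt (fun s => u t s) (Dx u t x) x := by
  have h := hdax u hu t x
  rwa [show Dx u t x = _ from h.deriv]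

theorem stmt_8
    (m : ℝ → ℝ) (hm : ContDiff ℝ (⊤ : ℕ∞) m) (hm0 : m 0 = 0)
    (γ ε : ℝ) (hγ : γ ≠ 0) (hε : ε = 1 ∨ ε = -1)
    (b c : ℝ → ℝ)
    (hbdef : ∀ y, b y = ε * (γ + deriv m y / γ))
    (hcdef : ∀ y, c y = -γ + deriv m y / γ)
    (B : ℝ → ℝ) (hB : ∀ y, B y = ∫ s in (0:ℝ)..y, b s)
    (q : ℝ → ℝ) (hq : ContDiff ℝ (⊤ : ℕ∞) q)
    (u : ℝ → ℝ → ℝ) (hu : Smooth2 u) :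
    (∀ y, B y = ε * (γ * y + m y / γ))
    ∧ (∀ t x : ℝ,
      Real.exp (γ * x) * q (x - ε * t) * Fop b c m u t x =
        Dt (fun t x => Real.exp (γ * x) *
          (q (x - ε * t) * (Dt u t x + B (u t x)) + ε * deriv q (x - ε * t) * u t x)) t x
        + Dx (fun t x => Real.exp (γ * x) *
          ((deriv q (x - ε * t) - γ * q (x - ε * t)) * u t x
            - q (x - ε * t) * (Dx u t x - ε * B (u t x)))) t x)
    ∧ ((∀ t x, Fop b c m u t x = 0) →
      ∀ t x : ℝ,
        Dt (fun t x => Real.exp (γ * x) *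
          (q (x - ε * t) * (Dt u t x + B (u t x)) + ε * deriv q (x - ε * t) * u t x)) t x
        + Dx (fun t x => Real.exp (γ * x) *
          ((deriv q (x - ε * t) - γ * q (x - ε * t)) * u t x
            - q (x - ε * t) * (Dx u t x - ε * B (u t x)))) t x = 0) := by
  have hm' : ContDiff ℝ (⊤ : ℕ∞) (deriv m) := (contDiff_infty_iff_deriv.mp hm).2
  have hq' : ContDiff ℝ (⊤ : ℕ∞) (deriv q) := (contDiff_infty_iff_deriv.mp hq).2
  have hmd : ∀ y, HasDerivAt m (deriv m y) y := fun y =>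
    ((hm.differentiable (by simp)) y).hasDerivAt
  have hqd : ∀ y, HasDerivAt q (deriv q y) y := fun y =>
    ((hq.differentiable (by simp)) y).hasDerivAt
  have hqd' : ∀ y, HasDerivAt (deriv q) (deriv (deriv q) y) y := fun y =>
    ((hq'.differentiable (by simp)) y).hasDerivAt
  -- derivative of the closed-form antiderivative
  have hgd : ∀ s : ℝ, HasDerivAt (fun z => ε * (γ * z + m z / γ)) (b s) s := by
    intro s
    have h1 : HasDerivAt (fun z : ℝ => γ * z + m z / γ) (γ * 1 + deriv m s / γ) s :=
      ((hasDerivAt_id s).const_mul γ).add ((hmd s).div_const γ)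
    have h2 := h1.const_mul ε
    rw [hbdef s]
    simpa using h2
  have hbcont : Continuous b := by
    have : b = fun y => ε * (γ + deriv m y / γ) := funext hbdef
    rw [this]
    exact continuous_const.mul (continuous_const.add ((hm'.continuous).div_const γ))
  -- Part 1
  have hB1 : ∀ y, B y = ε * (γ * y + m y / γ) := by
    intro y
    rw [hB y]
    have := intervalIntegral.integral_eq_sub_of_hasDerivAt
      (f := fun z => ε * (γ * z + m z / γ)) (fun s _ => hgd s)
      (hbcont.intervalIntegrable 0 y)
    rw [this]
    simp only [hm0]
    ring
  have hBd : ∀ y : ℝ, HasDerivAt B (ε * (γ + deriv m y / γ)) y := by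
    intro y
    have : B = fun z => ε * (γ * z + m z / γ) := funext hB1
    rw [this, ← hbdef y]
    exact hgd y
  -- main identity
  have main : ∀ t x : ℝ,
      Real.exp (γ * x) * q (x - ε * t) * Fop b c m u t x =
        Dt (fun t x => Real.exp (γ * x) *
          (q (x - ε * t) * (Dt u t x + B (u t x)) + ε * deriv q (x - ε * t) * u t x)) t x
        + Dx (fun t x => Real.exp (γ * x) *
          ((deriv q (x - ε * t) - γ * q (x - ε * t)) * u t x
            - q (x - ε * t) * (Dx u t x - ε * B (u t x)))) t x := by
    intro t x
    set U := u t x with hU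
    -- t-direction pieces
    have h1 : HasDerivAt (fun s => u s x) (Dt u t x) t := hDt u hu t x
    have h2 : HasDerivAt (fun s => Dt u s x) (Dt (Dt u) t x) t := hDt (Dt u) (smooth_Dt u hu) t x
    have hin_t : HasDerivAt (fun s : ℝ => x - ε * s) (-ε) t := by
      simpa using ((hasDerivAt_id' (x := t)).const_mul ε).const_sub x
    have hq3 : HasDerivAt (fun s : ℝ => q (x - ε * s)) (deriv q (x - ε * t) * (-ε)) t :=
      (hqd (x - ε * t)).comp t hin_t
    have hq4 : HasDerivAt (fun s : ℝ => deriv q (x - ε * s))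
        (deriv (deriv q) (x - ε * t) * (-ε)) t :=
      by have := (hqd' (x - ε * t)).comp t hin_t; exact this
    have h5 : HasDerivAt (fun s : ℝ => B (u s x)) (ε * (γ + deriv m U / γ) * Dt u t x) t :=
      (hBd U).comp t h1
    have hT : HasDerivAt (fun s : ℝ => Real.exp (γ * x) *
        (q (x - ε * s) * (Dt u s x + B (u s x)) + ε * deriv q (x - ε * s) * u s x))
        (Real.exp (γ * x) *
          ((deriv q (x - ε * t) * (-ε) * (Dt u t x + B U)
            + q (x - ε * t) * (Dt (Dt u) t x + ε * (γ + deriv m U / γ) * Dt u t x))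
          + (ε * (deriv (deriv q) (x - ε * t) * (-ε)) * u t x
            + ε * deriv q (x - ε * t) * Dt u t x))) t :=
      ((hq3.mul (h2.add h5)).add ((hq4.const_mul ε).mul h1)).const_mul (Real.exp (γ * x))
    -- x-direction pieces
    have k1 : HasDerivAt (fun y => u t y) (Dx u t x) x := hDx u hu t x
    have k2 : HasDerivAt (fun y => Dx u t y) (Dx (Dx u) t x) x := hDx (Dx u) (smooth_Dx u hu) t x
    have hin_x : HasDerivAt (fun y : ℝ => y - ε * t) 1 x := (hasDerivAt_id x).sub_const (ε * t)
    have kq3 : HasDerivAt (fun y : ℝ => q (y - ε * t)) (deriv q (x - ε * t) * 1) x :=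
      (hqd (x - ε * t)).comp x hin_x
    have kq4 : HasDerivAt (fun y : ℝ => deriv q (y - ε * t))
        (deriv (deriv q) (x - ε * t) * 1) x :=
      by have := (hqd' (x - ε * t)).comp x hin_x; exact this
    have k5 : HasDerivAt (fun y : ℝ => B (u t y)) (ε * (γ + deriv m U / γ) * Dx u t x) x :=
      (hBd U).comp x k1
    have kexp : HasDerivAt (fun y : ℝ => Real.exp (γ * y)) (Real.exp (γ * x) * (γ * 1)) x :=
      ((hasDerivAt_id x).const_mul γ).exp
    have hX : HasDerivAt (fun y : ℝ => Real.exp (γ * y) *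
        ((deriv q (y - ε * t) - γ * q (y - ε * t)) * u t y
          - q (y - ε * t) * (Dx u t y - ε * B (u t y))))
        (Real.exp (γ * x) * (γ * 1) *
          ((deriv q (x - ε * t) - γ * q (x - ε * t)) * U
            - q (x - ε * t) * (Dx u t x - ε * B U))
         + Real.exp (γ * x) *
          (((deriv (deriv q) (x - ε * t) * 1 - γ * (deriv q (x - ε * t) * 1)) * U
            + (deriv q (x - ε * t) - γ * q (x - ε * t)) * Dx u t x)
           - (deriv q (x - ε * t) * 1 * (Dx u t x - ε * B U)
            + q (x - ε * t) * (Dx (Dx u) t x - ε * (ε * (γ + deriv m U / γ) * Dx u t x))))) x :=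
      kexp.mul (((kq4.sub (kq3.const_mul γ)).mul k1).sub (kq3.mul (k2.sub (k5.const_mul ε))))
    rw [show Dt (fun t x => Real.exp (γ * x) *
          (q (x - ε * t) * (Dt u t x + B (u t x)) + ε * deriv q (x - ε * t) * u t x)) t x
        = _ from hT.deriv,
      show Dx (fun t x => Real.exp (γ * x) *
          ((deriv q (x - ε * t) - γ * q (x - ε * t)) * u t x
            - q (x - ε * t) * (Dx u t x - ε * B (u t x)))) t x = _ from hX.deriv]
    simp only [Fop, hbdef, hcdef, hB1, ← hU]
    rcases hε with rfl | rfl <;> field_simp <;> ring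
  refine ⟨hB1, main, fun hF t x => ?_⟩
  rw [← main t x, hF t x, mul_zero]
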